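/- Suppose ν₁, …, ν_{2m+1} are i.i.d. real random variables with symmetric density p satisfying p(u) ≤ B/(1 ∨ |u|)^{1+β} for some B > 0 and β ≥ 1, and suppose mβ ≥ 2. Then the second moment of their sample median satisfies E[Med(ν₁,…,ν_{2m+1})²] ≤ (2m+1) · (1 ∨ (4B/β))^{2/β}. -/

import Mathlib

open MeasureTheory Set

/-- The density of the median of `2m+1` i.i.d. samples with density `p` and CDF `P`. -/
noncomputable def medianDensity (p P : ℝ → ℝ) (m : ℕ) (t : ℝ) : ℝ :=
  (2 * m + 1) * (Nat.choose (2 * m) m : ℝ) * (P t) ^ m * (1 - P t) ^ m * p t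

theorem median_second_moment_le (p : ℝ → ℝ) (B β : ℝ) (m : ℕ)
    (hB : 0 < B) (hβ : 1 ≤ β) (hmβ : 2 ≤ (m : ℝ) * β)
    (hp_nonneg : ∀ u, 0 ≤ p u) (hp_int : Integrable p)
    (hp_tot : ∫ u, p u = 1)
    (hp_symm : ∀ u : ℝ, p u = p (-u))
    (hp_bound : ∀ u : ℝ, p u ≤ B / (max 1 |u|) ^ (1 + β))
    (P : ℝ → ℝ) (hP : ∀ t, P t = ∫ u in Set.Iic t, p u) :
    ∫ t : ℝ, t ^ 2 * medianDensity p P m t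
      ≤ (2 * m + 1) * (max 1 (4 * B / β)) ^ (2 / β) := by
  have hβ0 : (0:ℝ) < β := lt_of_lt_of_le one_pos hβ
  set M : ℝ := max 1 (4 * B / β) with hMdef
  have hM1 : (1:ℝ) ≤ M := le_max_left _ _
  have hM0 : (0:ℝ) < M := lt_of_lt_of_le one_pos hM1
  set a : ℝ := M ^ (1/β) with hadef
  have ha1 : (1:ℝ) ≤ a := Real.one_le_rpow hM1 (by positivity)
  have ha0 : (0:ℝ) < a := lt_of_lt_of_le one_pos ha1
  have haβ : a ^ β = M := by
    rw [hadef, ← Real.rpow_mul hM0.le, one_div, inv_mul_cancel₀ hβ0.ne', Real.rpow_one]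
  have ha2 : a ^ 2 = M ^ (2/β) := by
    rw [hadef, ← Real.rpow_natCast (M ^ (1/β)) 2, ← Real.rpow_mul hM0.le]
    norm_num
    ring_nf
  -- P bounds
  have hP0 : ∀ t, 0 ≤ P t := fun t => by
    rw [hP]; exact setIntegral_nonneg measurableSet_Iic fun u _ => hp_nonneg u
  have hP1 : ∀ t, P t ≤ 1 := fun t => by
    rw [hP, ← hp_tot]
    exact setIntegral_le_integral hp_int (Filter.Eventually.of_forall hp_nonneg)
  -- tail bound for t ≥ 1
  have htail : ∀ t : ℝ, 1 ≤ t → ∫ u in Ioi t, p u ≤ B / (β * t ^ β) := by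
    intro t ht
    have ht0 : (0:ℝ) < t := lt_of_lt_of_le one_pos ht
    have hexp : -(1+β) < -1 := by linarith
    have hle : ∀ u ∈ Ioi t, p u ≤ B * u ^ (-(1+β)) := by
      intro u hu
      have hu1 : (1:ℝ) ≤ u := le_trans ht (le_of_lt hu)
      have hu0 : (0:ℝ) < u := lt_of_lt_of_le one_pos hu1
      have : max 1 |u| = u := by
        rw [abs_of_pos hu0]; exact max_eq_right hu1
      calc p u ≤ B / (max 1 |u|) ^ (1 + β) := hp_bound u
        _ = B * u ^ (-(1+β)) := by
            rw [this, Real.rpow_neg hu0.le, div_eq_mul_inv]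
    calc ∫ u in Ioi t, p u ≤ ∫ u in Ioi t, B * u ^ (-(1+β)) := by
          apply setIntegral_mono_on (hp_int.integrableOn)
            (((integrableOn_Ioi_rpow_of_lt hexp ht0).const_mul B)) measurableSet_Ioi hle
      _ = B * ∫ u in Ioi t, u ^ (-(1+β)) := by rw [integral_const_mul]
      _ = B * (t ^ (-β) / β) := by
          rw [integral_Ioi_rpow_of_lt hexp ht0]
          congr 1
          rw [show -(1+β) + 1 = -β by ring]
          field_simp
      _ = B / (β * t ^ β) := by
          have h1 : (0:ℝ) < t ^ β := Real.rpow_pos_of_pos ht0 β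
          rw [Real.rpow_neg ht0.le, eq_div_iff (by positivity)]
          field_simp
  -- 1 - P t = ∫ over Ioi
  have hcompl : ∀ t : ℝ, 1 - P t = ∫ u in Ioi t, p u := by
    intro t
    have := integral_add_compl (measurableSet_Iic (a := t)) hp_int
    rw [compl_Iic] at this
    rw [hP, hp_tot] at *
    linarith [this.symm ▸ hp_tot]
  -- symmetry: P t = ∫ over Ioi (-t)
  have hsymmP : ∀ t : ℝ, P t = ∫ u in Ioi (-t), p u := by
    intro t
    rw [hP, ← integral_comp_neg_Iic]
    exact setIntegral_congr_fun measurableSet_Iic fun u _ => hp_symm u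
  -- pointwise bound
  have hC : (Nat.choose (2*m) m : ℝ) ≤ 4 ^ m := by
    exact_mod_cast le_trans (Nat.choose_le_choose m (by omega)) (Nat.choose_middle_le_pow m)
  have hpt : ∀ t : ℝ, t ^ 2 * medianDensity p P m t ≤ (2 * m + 1) * M ^ (2/β) * p t := by
    intro t
    have h1 := hP0 t; have h2 := hP1 t
    have hq0 : (0:ℝ) ≤ P t * (1 - P t) := mul_nonneg h1 (by linarith)
    have key : t ^ 2 * ((Nat.choose (2*m) m : ℝ) * (P t ^ m * (1 - P t) ^ m)) ≤ M ^ (2/β) := by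
      have step1 : (Nat.choose (2*m) m : ℝ) * (P t ^ m * (1 - P t) ^ m)
          ≤ (4 * (P t * (1 - P t))) ^ m := by
        rw [← mul_pow, mul_pow 4]
        exact mul_le_mul_of_nonneg_right hC (pow_nonneg hq0 m)
      rcases le_or_gt |t| a with hta | hta
      · -- small t
        have hq14 : 4 * (P t * (1 - P t)) ≤ 1 := by nlinarith [sq_nonneg (2 * P t - 1)]
        have h4 : (4 * (P t * (1 - P t))) ^ m ≤ 1 :=
          pow_le_one₀ (by positivity) hq14
        have ht2 : t ^ 2 ≤ a ^ 2 := by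
          rw [← sq_abs]
          exact pow_le_pow_left₀ (abs_nonneg t) hta 2
        calc t ^ 2 * ((Nat.choose (2*m) m : ℝ) * (P t ^ m * (1 - P t) ^ m))
            ≤ t ^ 2 * (4 * (P t * (1 - P t))) ^ m :=
              mul_le_mul_of_nonneg_left step1 (sq_nonneg t)
          _ ≤ a ^ 2 * 1 := mul_le_mul ht2 h4 (by positivity) (by positivity)
          _ = M ^ (2/β) := by rw [mul_one, ha2]
      · -- large t
        set s := |t| with hsdef
        have hs1 : (1:ℝ) ≤ s := le_trans ha1 hta.le
        have hs0 : (0:ℝ) < s := lt_of_lt_of_le one_pos hs1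
        have hsβ : (0:ℝ) < s ^ β := Real.rpow_pos_of_pos hs0 β
        have hq : P t * (1 - P t) ≤ B / (β * s ^ β) := by
          rcases le_or_gt 0 t with ht | ht
          · have hst : s = t := abs_of_nonneg ht
            have := htail t (hst ▸ hs1)
            rw [← hcompl t] at this
            calc P t * (1 - P t) ≤ 1 * (1 - P t) :=
                  mul_le_mul_of_nonneg_right h2 (by linarith)
              _ = 1 - P t := one_mul _
              _ ≤ B / (β * s ^ β) := by rw [hst]; exact this
          · have hst : s = -t := abs_of_neg ht
            have := htail (-t) (hst ▸ hs1)
            rw [← hsymmP t] at this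
            calc P t * (1 - P t) ≤ P t * 1 :=
                  mul_le_mul_of_nonneg_left (by linarith) h1
              _ = P t := mul_one _
              _ ≤ B / (β * s ^ β) := by rw [hst]; exact this
        have h4q : 4 * (P t * (1 - P t)) ≤ (a / s) ^ β := by
          rw [Real.div_rpow ha0.le hs0.le, haβ]
          calc 4 * (P t * (1 - P t)) ≤ 4 * (B / (β * s ^ β)) :=
                mul_le_mul_of_nonneg_left hq (by norm_num)
            _ = (4 * B / β) / s ^ β := by field_simp
            _ ≤ M / s ^ β := by gcongr; exact le_max_right _ _
        have hsl1 : a / s ≤ 1 := (div_le_one hs0).2 hta.le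
        have hsl0 : 0 < a / s := div_pos ha0 hs0
        have hfin : t ^ 2 * (4 * (P t * (1 - P t))) ^ m ≤ M ^ (2/β) := by
          have e1 : (4 * (P t * (1 - P t))) ^ m ≤ ((a / s) ^ β) ^ m :=
            pow_le_pow_left₀ (by positivity) h4q m
          have e2 : ((a / s) ^ β) ^ m = (a / s) ^ (β * m) := by
            rw [← Real.rpow_natCast ((a/s) ^ β) m, ← Real.rpow_mul hsl0.le]
          have e3 : (a / s) ^ (β * m) ≤ (a / s) ^ (2:ℝ) :=
            Real.rpow_le_rpow_of_exponent_ge hsl0 hsl1 (by rw [mul_comm]; exact hmβ)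
          have e4 : (a / s) ^ (2:ℝ) = a ^ 2 / s ^ 2 := by
            rw [Real.rpow_two, div_pow]
          calc t ^ 2 * (4 * (P t * (1 - P t))) ^ m
              ≤ t ^ 2 * (a ^ 2 / s ^ 2) := by
                apply mul_le_mul_of_nonneg_left _ (sq_nonneg t)
                rw [← e4]; exact le_trans e1 (e2 ▸ e3)
            _ = a ^ 2 := by
                rw [← sq_abs t, ← hsdef]; field_simp
            _ = M ^ (2/β) := ha2
        calc t ^ 2 * ((Nat.choose (2*m) m : ℝ) * (P t ^ m * (1 - P t) ^ m))
            ≤ t ^ 2 * (4 * (P t * (1 - P t))) ^ m :=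
              mul_le_mul_of_nonneg_left step1 (sq_nonneg t)
          _ ≤ M ^ (2/β) := hfin
    calc t ^ 2 * medianDensity p P m t
        = (2 * ↑m + 1) * (t ^ 2 * ((Nat.choose (2*m) m : ℝ) * (P t ^ m * (1 - P t) ^ m))) * p t := by
          unfold medianDensity; push_cast; ring
      _ ≤ (2 * ↑m + 1) * M ^ (2/β) * p t := by
          apply mul_le_mul_of_nonneg_right _ (hp_nonneg t)
          exact mul_le_mul_of_nonneg_left key (by positivity)
  -- conclude
  have hg : Integrable (fun t => (2 * ↑m + 1) * M ^ (2/β) * p t) := hp_int.const_mul _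
  calc ∫ t : ℝ, t ^ 2 * medianDensity p P m t
      ≤ ∫ t : ℝ, (2 * ↑m + 1) * M ^ (2/β) * p t := by
        apply integral_mono_of_nonneg _ hg (Filter.Eventually.of_forall hpt)
        apply Filter.Eventually.of_forall
        intro t
        have h1 := hP0 t; have h2 := hP1 t; have h3 := hp_nonneg t
        unfold medianDensity
        have : (0:ℝ) ≤ 1 - P t := by linarith
        positivity
    _ = (2 * ↑m + 1) * M ^ (2/β) := by
        rw [integral_const_mul, hp_tot, mul_one]
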